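/- Bruhat–Tits fixed point theorem: if a group G acts by isometries on a complete CAT(0) space X with a bounded orbit, then G has a fixed point in X. -/

import Mathlib

/-- A metric space is CAT(0) if it is geodesic and satisfies the CN (comparison)
inequality of Bruhat–Tits for midpoints. -/
def CAT0 (X : Type*) [MetricSpace X] : Prop :=
  (∀ x y : X, ∃ γ : ℝ → X, γ 0 = x ∧ γ (dist x y) = y ∧
    ∀ s ∈ Set.Icc (0 : ℝ) (dist x y), ∀ t ∈ Set.Icc (0 : ℝ) (dist x y),
      dist (γ s) (γ t) = |s - t|) ∧
  ∀ x y z m : X, dist y m = dist y z / 2 → dist z m = dist y z / 2 →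
    dist x m ^ 2 ≤ (dist x y ^ 2 + dist x z ^ 2) / 2 - dist y z ^ 2 / 4

theorem bruhat_tits_fixed_point {X : Type*} [MetricSpace X] [CompleteSpace X]
    (hX : CAT0 X) (G : Type*) [Group G] [MulAction G X]
    (hiso : ∀ g : G, Isometry (fun x : X => g • x))
    (hbdd : ∃ x : X, Bornology.IsBounded (Set.range fun g : G => g • x)) :
    ∃ x : X, ∀ g : G, g • x = x := by
  obtain ⟨x₀, hbd⟩ := hbdd
  set S : Set X := Set.range fun g : G => g • x₀ with hS
  have hSne : S.Nonempty := ⟨(1 : G) • x₀, ⟨1, rfl⟩⟩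
  obtain ⟨s₀, hs₀⟩ := hSne
  obtain ⟨C, hC⟩ := Metric.isBounded_iff.mp hbd
  -- the radius function
  set f : X → ℝ := fun x => sSup ((fun s => dist x s) '' S) with hf
  have hbdda : ∀ x : X, BddAbove ((fun s => dist x s) '' S) := by
    intro x
    refine ⟨dist x s₀ + C, ?_⟩
    rintro r ⟨s, hs, rfl⟩
    calc dist x s ≤ dist x s₀ + dist s₀ s := dist_triangle _ _ _
      _ ≤ dist x s₀ + C := by gcongr; exact hC hs₀ hs
  have hle : ∀ x : X, ∀ s ∈ S, dist x s ≤ f x := fun x s hs =>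
    le_csSup (hbdda x) ⟨s, hs, rfl⟩
  have hf0 : ∀ x : X, 0 ≤ f x := fun x => le_trans dist_nonneg (hle x s₀ hs₀)
  have hfle : ∀ x : X, ∀ a : ℝ, 0 ≤ a → (∀ s ∈ S, dist x s ≤ a) → f x ≤ a := by
    intro x a ha h
    apply Real.sSup_le _ ha
    rintro r ⟨s, hs, rfl⟩
    exact h s hs
  -- the infimum of radii
  set ρ : ℝ := sInf (Set.range f) with hρ
  have hbddb : BddBelow (Set.range f) := ⟨0, by rintro r ⟨x, rfl⟩; exact hf0 x⟩
  have hρle : ∀ x : X, ρ ≤ f x := fun x => csInf_le hbddb ⟨x, rfl⟩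
  have hρ0 : 0 ≤ ρ := le_csInf ⟨f x₀, x₀, rfl⟩ (by rintro r ⟨x, rfl⟩; exact hf0 x)
  -- key inequality from CN
  have key : ∀ x y : X, dist x y ^ 2 ≤ 2 * f x ^ 2 + 2 * f y ^ 2 - 4 * ρ ^ 2 := by
    intro x y
    obtain ⟨γ, hγ0, hγd, hγ⟩ := hX.1 x y
    set d := dist x y with hd
    have hd0 : 0 ≤ d := dist_nonneg
    set m := γ (d / 2) with hm
    have h1 : dist x m = d / 2 := by
      rw [hm, ← hγ0]
      rw [hγ 0 ⟨le_refl 0, hd0⟩ (d / 2) ⟨by linarith, by linarith⟩]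
      rw [abs_of_nonpos (by linarith)]; ring
    have h2 : dist y m = d / 2 := by
      rw [hm, ← hγd]
      rw [hγ d ⟨hd0, le_refl d⟩ (d / 2) ⟨by linarith, by linarith⟩]
      rw [abs_of_nonneg (by linarith)]; ring
    set K := (f x ^ 2 + f y ^ 2) / 2 - d ^ 2 / 4 with hK
    have hcn : ∀ s ∈ S, dist s m ^ 2 ≤ K := by
      intro s hs
      have := hX.2 s x y m h1 h2
      rw [← hd] at this
      have hx : dist s x ≤ f x := by rw [dist_comm]; exact hle x s hs
      have hy : dist s y ≤ f y := by rw [dist_comm]; exact hle y s hs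
      have hx2 : dist s x ^ 2 ≤ f x ^ 2 := by
        apply pow_le_pow_left₀ dist_nonneg hx
      have hy2 : dist s y ^ 2 ≤ f y ^ 2 := by
        apply pow_le_pow_left₀ dist_nonneg hy
      rw [hK]
      linarith [this]
    have hK0 : 0 ≤ K := le_trans (sq_nonneg (dist s₀ m)) (hcn s₀ hs₀)
    have hfm : f m ≤ Real.sqrt K := by
      apply hfle m _ (Real.sqrt_nonneg K)
      intro s hs
      rw [dist_comm]
      exact (Real.le_sqrt dist_nonneg hK0).mpr (hcn s hs)
    have hρm : ρ ^ 2 ≤ K := by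
      have h1 : ρ ≤ Real.sqrt K := le_trans (hρle m) hfm
      have := pow_le_pow_left₀ hρ0 h1 2
      rwa [Real.sq_sqrt hK0] at this
    have hdK : d ^ 2 ≤ 2 * f x ^ 2 + 2 * f y ^ 2 - 4 * ρ ^ 2 := by
      rw [hK] at hρm; linarith
    exact hdK
  -- minimizing sequence
  have hseq : ∀ n : ℕ, ∃ x : X, f x < ρ + 1 / (n + 1) := by
    intro n
    have hpos : (0 : ℝ) < 1 / (n + 1) := by positivity
    obtain ⟨r, ⟨x, rfl⟩, hr⟩ := exists_lt_of_csInf_lt ⟨f x₀, Set.mem_range_self x₀⟩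
      (show ρ < ρ + 1 / (n + 1) by linarith)
    exact ⟨x, hr⟩
  choose u hu using hseq
  -- Cauchy estimate
  set b : ℕ → ℝ := fun N => 2 * Real.sqrt ((ρ + 1 / (N + 1)) ^ 2 - ρ ^ 2) with hb
  have hmono : ∀ n N : ℕ, N ≤ n → (1 : ℝ) / (n + 1) ≤ 1 / (N + 1) := by
    intro n N h
    apply one_div_le_one_div_of_le (by positivity)
    have : (N : ℝ) ≤ n := Nat.cast_le.mpr h
    linarith
  have hcauchy : CauchySeq u := by
    apply cauchySeq_of_le_tendsto_0 b
    · intro n m N hn hm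
      have h1 : f (u n) < ρ + 1 / (N + 1) :=
        lt_of_lt_of_le (hu n) (by linarith [hmono n N hn])
      have h2 : f (u m) < ρ + 1 / (N + 1) :=
        lt_of_lt_of_le (hu m) (by linarith [hmono m N hm])
      have hkey := key (u n) (u m)
      set A := (ρ + 1 / (N + 1)) ^ 2 - ρ ^ 2 with hA
      have hfn2 : f (u n) ^ 2 ≤ (ρ + 1 / (N + 1)) ^ 2 :=
        pow_le_pow_left₀ (hf0 _) h1.le 2
      have hfm2 : f (u m) ^ 2 ≤ (ρ + 1 / (N + 1)) ^ 2 :=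
        pow_le_pow_left₀ (hf0 _) h2.le 2
      have hd2 : dist (u n) (u m) ^ 2 ≤ 4 * A := by rw [hA]; nlinarith
      have hA0 : 0 ≤ A := by nlinarith [sq_nonneg (dist (u n) (u m))]
      have : dist (u n) (u m) ≤ 2 * Real.sqrt A := by
        rw [show (2 : ℝ) * Real.sqrt A = Real.sqrt (4 * A) by
          rw [show (4 : ℝ) * A = (2 * Real.sqrt A) ^ 2 by
            rw [mul_pow, Real.sq_sqrt hA0]; ring,
          Real.sqrt_sq (by positivity)]]
        rw [← Real.sqrt_sq (dist_nonneg (x := u n) (y := u m))]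
        exact Real.sqrt_le_sqrt hd2
      exact this
    · have h0 : Filter.Tendsto (fun n : ℕ => (1 : ℝ) / (n + 1)) Filter.atTop (nhds 0) :=
        tendsto_one_div_add_atTop_nhds_zero_nat
      have hcont : Continuous fun e : ℝ => 2 * Real.sqrt ((ρ + e) ^ 2 - ρ ^ 2) := by
        continuity
      have := (hcont.tendsto 0).comp h0
      simpa [hb, Function.comp_def, one_div] using this
  obtain ⟨c, hc⟩ := cauchySeq_tendsto_of_complete hcauchy
  -- the circumcenter property
  have hdc : Filter.Tendsto (fun n : ℕ => dist c (u n)) Filter.atTop (nhds 0) := by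
    simpa [dist_self] using (Filter.Tendsto.dist tendsto_const_nhds hc : Filter.Tendsto
      (fun n : ℕ => dist c (u n)) Filter.atTop (nhds (dist c c)))
  have hcirc : ∀ s ∈ S, dist c s ≤ ρ := by
    intro s hs
    have hlim : Filter.Tendsto (fun n : ℕ => dist c (u n) + (ρ + 1 / (n + 1)))
        Filter.atTop (nhds ρ) := by
      have h2 : Filter.Tendsto (fun n : ℕ => ρ + 1 / ((n : ℝ) + 1)) Filter.atTop
          (nhds (ρ + 0)) := tendsto_const_nhds.add tendsto_one_div_add_atTop_nhds_zero_nat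
      simpa using hdc.add h2
    refine ge_of_tendsto hlim (Filter.Eventually.of_forall fun n => ?_)
    calc dist c s ≤ dist c (u n) + dist (u n) s := dist_triangle _ _ _
      _ ≤ dist c (u n) + f (u n) := by gcongr; exact hle (u n) s hs
      _ ≤ dist c (u n) + (ρ + 1 / (n + 1)) := by gcongr; exact (hu n).le
  -- uniqueness: any point whose distances to S are ≤ ρ equals c
  have huniq : ∀ y : X, (∀ s ∈ S, dist y s ≤ ρ) → y = c := by
    intro y hy
    have hfy : f y ≤ ρ := hfle y ρ hρ0 hy
    have hfc : f c ≤ ρ := hfle c ρ hρ0 hcirc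
    have hfy2 : f y ^ 2 ≤ ρ ^ 2 := pow_le_pow_left₀ (hf0 y) hfy 2
    have hfc2 : f c ^ 2 ≤ ρ ^ 2 := pow_le_pow_left₀ (hf0 c) hfc 2
    have := key y c
    have hd2 : dist y c ^ 2 ≤ 0 := by linarith
    have h0 : dist y c ^ 2 = 0 := le_antisymm hd2 (sq_nonneg _)
    exact dist_eq_zero.mp ((pow_eq_zero_iff two_ne_zero).mp h0)
  -- conclude: G fixes c
  refine ⟨c, fun g => huniq (g • c) fun s hs => ?_⟩
  obtain ⟨g', rfl⟩ := hs
  have h1 : (g : G) • ((g⁻¹ * g') • x₀) = g' • x₀ := by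
    rw [smul_smul, mul_inv_cancel_left]
  have h2 : (g⁻¹ * g') • x₀ ∈ S := ⟨g⁻¹ * g', rfl⟩
  calc dist (g • c) (g' • x₀) = dist (g • c) (g • ((g⁻¹ * g') • x₀)) := by rw [h1]
    _ = dist c ((g⁻¹ * g') • x₀) := (hiso g).dist_eq _ _
    _ ≤ ρ := hcirc _ h2
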